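/- Let H be a complex Hilbert space and let X ∈ B(H) be positive and invertible. Then for every Y ∈ B(H), (1 + X)⁻¹ ≤ Y*Y + (1 − Y)* X⁻¹ (1 − Y), and equality holds if and only if Y = (1 + X)⁻¹. -/

import Mathlib

/-- Auxiliary pure ring identity used in Lemma 6.6. -/
lemma aux_ring_id {R : Type*} [Ring R] (y' y j z : R)
    (h1 : j * z = j - z) (h2 : z * j = j - z) :
    y' * y + (1 - y') * j * (1 - y) = z + ((y' - z) * (y - z) + (y' - z) * j * (y - z)) := by
  have e2' : z * (j * z) = j - z - z * z := by
    rw [h1, mul_sub, h2]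
  have expand : z + ((y' - z) * (y - z) + (y' - z) * j * (y - z)) =
      z + (y' * y - y' * z - z * y + z * z) +
        (y' * j * y - y' * (j * z) - z * j * y + z * (j * z)) := by
    noncomm_ring
  rw [expand, e2', h1, h2]
  noncomm_ring

theorem inv_one_add_le_and_eq_iff
    {H : Type*} [NormedAddCommGroup H] [InnerProductSpace ℂ H] [CompleteSpace H]
    (X : H →L[ℂ] H) (hX : X.IsPositive) (hXu : IsUnit X) :
    ∀ Y : H →L[ℂ] H,
      Ring.inverse (1 + X) ≤ star Y * Y + star (1 - Y) * Ring.inverse X * (1 - Y) ∧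
      (Ring.inverse (1 + X) = star Y * Y + star (1 - Y) * Ring.inverse X * (1 - Y) ↔
        Y = Ring.inverse (1 + X)) := by
  intro Y
  set j : H →L[ℂ] H := Ring.inverse X with hj
  set z : H →L[ℂ] H := Ring.inverse (1 + X) with hz
  have hX0 : (0 : H →L[ℂ] H) ≤ X := (ContinuousLinearMap.nonneg_iff_isPositive X).2 hX
  have hU1 : IsUnit (1 + X : H →L[ℂ] H) :=
    CStarAlgebra.isUnit_of_le 1 (le_add_of_nonneg_right hX0) isStrictlyPositive_one
  have h1 : (1 + X) * z = 1 := Ring.mul_inverse_cancel _ hU1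
  have h2 : z * (1 + X) = 1 := Ring.inverse_mul_cancel _ hU1
  have h3 : X * j = 1 := Ring.mul_inverse_cancel _ hXu
  have h4 : j * X = 1 := Ring.inverse_mul_cancel _ hXu
  have hjz : j * z = j - z := by
    refine eq_sub_of_add_eq ?_
    calc j * z + z = (j * (1 + X)) * z := by rw [mul_add, mul_one, h4, add_mul, one_mul]
      _ = j := by rw [mul_assoc, h1, mul_one]
  have hzj : z * j = j - z := by
    refine eq_sub_of_add_eq ?_
    calc z * j + z = z * ((1 + X) * j) := by rw [add_mul, one_mul, h3, mul_add, mul_one]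
      _ = j := by rw [← mul_assoc, h2, one_mul]
  have hXs : star X = X := hX.isSelfAdjoint
  have hzs : star z = z := by
    rw [hz, ← Ring.inverse_star, star_add, star_one, hXs]
  have hjs : star j = j := by rw [hj, ← Ring.inverse_star, hXs]
  -- positivity of j
  have hj0 : (0 : H →L[ℂ] H) ≤ j := by
    rw [ContinuousLinearMap.nonneg_iff_isPositive]
    refine ⟨ContinuousLinearMap.isSelfAdjoint_iff_isSymmetric.mp hjs, fun x => ?_⟩
    have hxj : X (j x) = x := by
      have := congrArg (fun T : H →L[ℂ] H => T x) h3
      simpa using this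
    have h0 := hX.2 (j x)
    rw [ContinuousLinearMap.reApplyInnerSelf_apply] at h0 ⊢
    nth_rewrite 2 [← hxj]
    rw [inner_re_symm]
    exact h0
  -- the key algebraic identity
  set W : H →L[ℂ] H := Y - z with hW
  have hsW : star Y - z = star W := by rw [hW, star_sub, hzs]
  have key : star Y * Y + star (1 - Y) * j * (1 - Y) =
      z + (star W * W + star W * j * W) := by
    rw [star_sub, star_one]
    rw [aux_ring_id (star Y) Y j z hjz hzj, hsW, hW]
  have h0S1 : (0 : H →L[ℂ] H) ≤ star W * W := star_mul_self_nonneg W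
  have h0S2 : (0 : H →L[ℂ] H) ≤ star W * j * W := star_left_conjugate_nonneg hj0 W
  constructor
  · rw [key]
    exact le_add_of_nonneg_right (add_nonneg h0S1 h0S2)
  · constructor
    · intro h
      rw [key] at h
      have hS : star W * W + star W * j * W = 0 := (left_eq_add.mp h)
      have hle : star W * W ≤ 0 := hS ▸ le_add_of_nonneg_right h0S2
      have hWW : star W * W = 0 := le_antisymm hle h0S1
      have hW0 : W = 0 := (CStarRing.star_mul_self_eq_zero_iff W).mp hWW
      have : Y - z = 0 := hW0
      rw [sub_eq_zero] at this
      exact this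
    · intro h
      have hW0 : W = 0 := by rw [hW, h, sub_self]
      rw [key, hW0]
      simp
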